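/- Let ρ be a self-adjoint positive semidefinite matrix with eigenvalues in [0,1] and P a density matrix. Then Tr(f(ρ)P) ≤ f(Tr(ρP)) for every concave function f on [0,1]. -/

import Mathlib

open Set Matrix
open scoped ComplexOrder

lemma psd_diag_nonneg {d : ℕ} {A : Matrix (Fin d) (Fin d) ℂ} (hA : A.PosSemidef)
    (i : Fin d) : 0 ≤ A i i := by
  exact hA.diag_nonneg

theorem trace_jensen_ineq
    {d : ℕ} (ρ P : Matrix (Fin d) (Fin d) ℂ)
    (hρ : ρ.PosSemidef) (hρ1 : ((1 : Matrix (Fin d) (Fin d) ℂ) - ρ).PosSemidef)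
    (hP : P.PosSemidef) (hPtr : P.trace = 1)
    (f : ℝ → ℝ) (hf : ConcaveOn ℝ (Icc (0:ℝ) 1) f) :
    ((hρ.1.cfc f * P).trace).re ≤ f (((ρ * P).trace).re) := by
  classical
  set V : Matrix (Fin d) (Fin d) ℂ :=
    (Matrix.IsHermitian.eigenvectorUnitary hρ.1 : Matrix (Fin d) (Fin d) ℂ) with hV
  set lam := hρ.1.eigenvalues with hlam
  have hsV : star V * V = 1 :=
    Matrix.mem_unitaryGroup_iff'.mp (Matrix.IsHermitian.eigenvectorUnitary hρ.1).2
  have hVs : V * star V = 1 :=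
    Matrix.mem_unitaryGroup_iff.mp (Matrix.IsHermitian.eigenvectorUnitary hρ.1).2
  set Q : Matrix (Fin d) (Fin d) ℂ := star V * P * V with hQdef
  have hQ : Q.PosSemidef := hP.conjTranspose_mul_mul_same V
  have hQtr : Q.trace = 1 := by
    rw [hQdef, Matrix.trace_mul_cycle, hVs, one_mul, hPtr]
  set w : Fin d → ℝ := fun i => (Q i i).re with hw
  have hw0 : ∀ i ∈ Finset.univ, 0 ≤ w i := by
    intro i _
    have h := psd_diag_nonneg hQ i
    rw [Complex.le_def] at h
    simpa [w] using h.1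
  have hw0' : ∀ i ∈ Finset.univ, 0 ≤ w i := hw0
  have hw1 : ∑ i, w i = 1 := by
    have : (Q.trace).re = 1 := by rw [hQtr]; simp
    simpa [Matrix.trace, Matrix.diag, Complex.re_sum, w] using this
  -- eigenvalues are in [0,1]
  have hdiag : star V * ρ * V = Matrix.diagonal (fun i => (lam i : ℂ)) := by
    simpa [Function.comp_def, Unitary.conjStarAlgAut_apply] using hρ.1.conjStarAlgAut_star_eigenvectorUnitary
  have hlam_mem : ∀ i ∈ Finset.univ, lam i ∈ Icc (0:ℝ) 1 := by
    intro i _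
    refine ⟨hρ.eigenvalues_nonneg i, ?_⟩
    have h1 : (star V * ((1 : Matrix (Fin d) (Fin d) ℂ) - ρ) * V).PosSemidef :=
      hρ1.conjTranspose_mul_mul_same V
    have h2 : star V * ((1 : Matrix (Fin d) (Fin d) ℂ) - ρ) * V
        = 1 - Matrix.diagonal (fun i => (lam i : ℂ)) := by
      rw [mul_sub, sub_mul, mul_one, hsV, hdiag]
    rw [h2] at h1
    have h3 := psd_diag_nonneg h1 i
    have h4 : ((1 : Matrix (Fin d) (Fin d) ℂ) - Matrix.diagonal (fun i => (lam i : ℂ))) i i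
        = ((1 - lam i : ℝ) : ℂ) := by
      simp [Matrix.sub_apply, Matrix.one_apply, Matrix.diagonal_apply_eq]
    rw [h4] at h3
    have h5 := Complex.zero_le_real.mp h3
    linarith
  -- trace identities
  have key : ∀ g : ℝ → ℝ,
      ((V * Matrix.diagonal (fun i => ((g (lam i) : ℝ) : ℂ)) * star V * P).trace).re
        = ∑ i, w i * g (lam i) := by
    intro g
    have : (V * Matrix.diagonal (fun i => ((g (lam i) : ℝ) : ℂ)) * star V * P).trace
        = (Matrix.diagonal (fun i => ((g (lam i) : ℝ) : ℂ)) * Q).trace := by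
      rw [hQdef]
      rw [show V * Matrix.diagonal (fun i => ((g (lam i) : ℝ) : ℂ)) * star V * P
          = V * (Matrix.diagonal (fun i => ((g (lam i) : ℝ) : ℂ)) * (star V * P)) from by
        simp [mul_assoc]]
      rw [Matrix.trace_mul_comm, mul_assoc]
    rw [this]
    simp only [Matrix.trace, Matrix.diag, Matrix.diagonal_mul, Complex.re_sum]
    refine Finset.sum_congr rfl fun i _ => ?_
    rw [Complex.re_ofReal_mul, mul_comm]
  have hcfc : ((hρ.1.cfc f * P).trace).re = ∑ i, w i * f (lam i) := by
    have : hρ.1.cfc f = V * Matrix.diagonal (fun i => ((f (lam i) : ℝ) : ℂ)) * star V := by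
      simp [Matrix.IsHermitian.cfc, Function.comp, hV, hlam]
      rfl
    rw [this, key]
  have hρP : ((ρ * P).trace).re = ∑ i, w i * lam i := by
    have : ρ = V * Matrix.diagonal (fun i => ((lam i : ℝ) : ℂ)) * star V := by
      have := hρ.1.spectral_theorem
      simpa [Function.comp_def, hV, hlam, Unitary.conjStarAlgAut_apply] using this
    rw [this]
    simpa using key id
  rw [hcfc, hρP]
  have := hf.le_map_sum (t := Finset.univ) (w := w) (p := lam) hw0' (by simpa using hw1) hlam_mem
  simpa [smul_eq_mul] using this
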